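/- For every nonnegative integer n, Σ_{k=0}^{n} (C(n,k)/(k+1)^2)·(−4/3)^k = 1/(n+1) + (3/(4(n+1)))·Σ_{k=1}^{n} 1/(k+1) + (1/(4(n+1)))·Σ_{k=1}^{n} 1/((k+1)·(−3)^k). -/

import Mathlib

open Finset

private lemma icc_to_range (f : ℕ → ℚ) (n : ℕ) :
    ∑ k ∈ Finset.Icc 1 n, f k = ∑ k ∈ Finset.range n, f (k + 1) := by
  induction n with
  | zero => simp
  | succ n ih =>
    rw [Finset.sum_Icc_succ_top (by omega), ih, Finset.sum_range_succ]

private lemma cast_choose_div (n k : ℕ) :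
    (n.choose k : ℚ) / (k + 1) = ((n + 1).choose (k + 1) : ℚ) / (n + 1) := by
  have h := Nat.add_one_mul_choose_eq n k
  have h' : ((n + 1 : ℕ) : ℚ) * (n.choose k : ℚ) = ((n + 1).choose (k + 1) : ℚ) * (k + 1 : ℕ) := by
    exact_mod_cast congrArg (Nat.cast : ℕ → ℚ) h
  push_cast at h'
  have hk : ((k : ℚ) + 1) ≠ 0 := by positivity
  have hn : ((n : ℚ) + 1) ≠ 0 := by positivity
  field_simp
  linarith [h']

private lemma binom (x : ℚ) (n : ℕ) :
    ∑ k ∈ Finset.range (n + 1), (n.choose k : ℚ) * x ^ k = (1 + x) ^ n := by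
  have : (1 + x) ^ n = (x + 1) ^ n := by ring
  rw [this, add_pow]
  refine Finset.sum_congr rfl fun k _ => ?_
  rw [one_pow]; ring

private lemma auxA (x : ℚ) (n : ℕ) :
    ∑ k ∈ Finset.range (n + 1), ((n + 1).choose (k + 1) : ℚ) * x ^ (k + 1) / (k + 1) =
      ∑ j ∈ Finset.range (n + 1), ((1 + x) ^ (j + 1) - 1) / (j + 1) := by
  induction n with
  | zero => simp
  | succ n ih =>
    have pascal : ∀ k : ℕ, ((n + 2).choose (k + 1) : ℚ)
        = (n + 1).choose k + (n + 1).choose (k + 1) := by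
      intro k; exact_mod_cast Nat.choose_succ_succ (n + 1) k
    have split : ∑ k ∈ Finset.range (n + 2), ((n + 2).choose (k + 1) : ℚ) * x ^ (k + 1) / (k + 1)
        = (∑ k ∈ Finset.range (n + 2), ((n + 1).choose k : ℚ) * x ^ (k + 1) / (k + 1))
          + ∑ k ∈ Finset.range (n + 2), ((n + 1).choose (k + 1) : ℚ) * x ^ (k + 1) / (k + 1) := by
      rw [← Finset.sum_add_distrib]
      refine Finset.sum_congr rfl fun k _ => ?_
      rw [pascal]; ring
    have second : ∑ k ∈ Finset.range (n + 2), ((n + 1).choose (k + 1) : ℚ) * x ^ (k + 1) / (k + 1)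
        = ∑ k ∈ Finset.range (n + 1), ((n + 1).choose (k + 1) : ℚ) * x ^ (k + 1) / (k + 1) := by
      rw [Finset.sum_range_succ, Nat.choose_eq_zero_of_lt (by omega)]
      simp
    have first : ∑ k ∈ Finset.range (n + 2), ((n + 1).choose k : ℚ) * x ^ (k + 1) / (k + 1)
        = ((1 + x) ^ (n + 2) - 1) / (n + 2) := by
      have key : ∀ k : ℕ, ((n + 1).choose k : ℚ) * x ^ (k + 1) / (k + 1)
          = ((n + 2).choose (k + 1) : ℚ) * x ^ (k + 1) / (n + 2) := by
        intro k
        have hc := cast_choose_div (n + 1) k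
        have e : n + 1 + 1 = n + 2 := by omega
        rw [e] at hc
        push_cast at hc
        calc ((n + 1).choose k : ℚ) * x ^ (k + 1) / (k + 1)
            = ((n + 1).choose k : ℚ) / (k + 1) * x ^ (k + 1) := by ring
          _ = ((n + 2).choose (k + 1) : ℚ) / ((n : ℚ) + 2) * x ^ (k + 1) := by
              rw [hc]; ring_nf
          _ = ((n + 2).choose (k + 1) : ℚ) * x ^ (k + 1) / (n + 2) := by ring
      rw [Finset.sum_congr rfl fun k _ => key k, ← Finset.sum_div]
      congr 1
      have hb := binom x (n + 2)
      rw [Finset.sum_range_succ' (fun k => ((n + 2).choose k : ℚ) * x ^ k) (n + 2)] at hb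
      simp only [Nat.choose_zero_right, Nat.cast_one, pow_zero, one_mul] at hb
      linarith [hb]
    rw [split, second, ih, first, Finset.sum_range_succ
      (fun j => ((1 + x) ^ (j + 1) - 1) / ((j : ℚ) + 1)) (n + 1)]
    push_cast
    ring

theorem sum_choose_div_sq_neg_four_thirds (n : ℕ) :
    ∑ k ∈ Finset.range (n + 1), ((n.choose k : ℚ) / (k + 1) ^ 2) * (-4 / 3) ^ k =
      1 / (n + 1) + 3 / (4 * (n + 1)) * ∑ k ∈ Finset.Icc 1 n, (1 : ℚ) / (k + 1) +
        1 / (4 * (n + 1)) * ∑ k ∈ Finset.Icc 1 n, (1 : ℚ) / ((k + 1) * (-3) ^ k) := by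
  have hn : ((n : ℚ) + 1) ≠ 0 := by positivity
  have key : ∑ k ∈ Finset.range (n + 1), ((n.choose k : ℚ) / (k + 1) ^ 2) * (-4 / 3) ^ k
      = (-3 / (4 * ((n : ℚ) + 1))) * ∑ j ∈ Finset.range (n + 1),
          ((-1/3 : ℚ) ^ (j + 1) - 1) / (j + 1) := by
    have step : ∀ k : ℕ, ((n.choose k : ℚ) / (k + 1) ^ 2) * (-4 / 3) ^ k
        = (-3 / (4 * ((n : ℚ) + 1))) * (((n + 1).choose (k + 1) : ℚ) * (-4/3 : ℚ) ^ (k + 1) / (k + 1)) := by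
      intro k
      have hc := cast_choose_div n k
      have hk : ((k : ℚ) + 1) ≠ 0 := by positivity
      calc ((n.choose k : ℚ) / (k + 1) ^ 2) * (-4 / 3) ^ k
          = ((n.choose k : ℚ) / (k + 1)) * ((-4/3 : ℚ) ^ k / (k + 1)) := by
            rw [sq, ← div_div]; ring
        _ = (((n + 1).choose (k + 1) : ℚ) / ((n : ℚ) + 1)) * ((-4/3 : ℚ) ^ k / (k + 1)) := by
            rw [hc]
        _ = (-3 / (4 * ((n : ℚ) + 1))) * (((n + 1).choose (k + 1) : ℚ) * (-4/3 : ℚ) ^ (k + 1) / (k + 1)) := by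
            rw [pow_succ]; field_simp
    rw [Finset.sum_congr rfl fun k _ => step k, ← Finset.mul_sum]
    congr 1
    have := auxA (-4/3 : ℚ) n
    rw [this]
    norm_num
  rw [key, icc_to_range, icc_to_range,
    Finset.sum_range_succ' (fun j => ((-1/3 : ℚ) ^ (j + 1) - 1) / ((j : ℚ) + 1)) n,
    mul_add, Finset.mul_sum]
  push_cast
  have term : ∀ j : ℕ, (-3 / (4 * ((n : ℚ) + 1))) * (((-1/3 : ℚ) ^ (j + 1 + 1) - 1) / ((j : ℚ) + 1 + 1))
      = 3 / (4 * ((n : ℚ) + 1)) * (1 / ((j : ℚ) + 1 + 1))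
        + 1 / (4 * ((n : ℚ) + 1)) * (1 / (((j : ℚ) + 1 + 1) * (-3 : ℚ) ^ (j + 1))) := by
    intro j
    have hj : ((j : ℚ) + 1 + 1) ≠ 0 := by positivity
    have h3 : ((-3 : ℚ)) ^ (j + 1) ≠ 0 := pow_ne_zero _ (by norm_num)
    have e : (-1/3 : ℚ) = (-3 : ℚ)⁻¹ := by norm_num
    rw [e, inv_pow, pow_succ, pow_succ]
    have h3' : ((-3 : ℚ)) ^ j ≠ 0 := pow_ne_zero _ (by norm_num)
    field_simp
    ring
  rw [Finset.sum_congr rfl fun j _ => term j, Finset.sum_add_distrib,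
    ← Finset.mul_sum, ← Finset.mul_sum]
  norm_num
  field_simp
  ring
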